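/- Let G be a connected graph and F ⊆ G a frame with ds(F) maximal. For every F-path Q with endvertices u, v there is a u–v-path of length less than ℓ contained in F; moreover, if every long cycle in G has length at least 2ℓ, this short u–v-path in F is unique. -/

import Mathlib

open SimpleGraph

/-- A frame of `G`: a subgraph with minimum degree at least `2` in which
every cycle is long, i.e. has length at least `ℓ`. -/
def IsFrame (ℓ : ℕ) {V : Type} {G : SimpleGraph V} (F : G.Subgraph) : Prop :=
  (∀ v ∈ F.verts, 2 ≤ (F.neighborSet v).ncard) ∧
  (∀ (x : V) (C : G.Walk x x), C.IsCycle →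
    (∀ e ∈ C.edges, e ∈ F.edgeSet) → ℓ ≤ C.length)

open scoped Classical in
/-- `ds F`: the sum of the degrees of the vertices of degree at least `3`
in `F`. -/
noncomputable def dsF {V : Type} [Fintype V] {G : SimpleGraph V}
    (F : G.Subgraph) : ℕ :=
  ∑ v ∈ Finset.univ.filter (fun v => 3 ≤ (F.neighborSet v).ncard),
    (F.neighborSet v).ncard

section AuxLemmas

variable {V : Type} {G : SimpleGraph V}

/-- If a path-like walk (nodup support) starting at `a` has an edge `s(a,q)`,
then it starts with that edge. -/
lemma aux_ep {a b q : V} (P : G.Walk a b) (hnd : P.support.Nodup)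
    (he : s(a, q) ∈ P.edges) :
    ∃ (h : G.Adj a q) (P' : G.Walk q b), P = Walk.cons h P' := by
  cases P with
  | nil => simp at he
  | @cons _ c _ h' P'' =>
    rw [Walk.edges_cons, List.mem_cons] at he
    rcases he with he | he
    · rw [Sym2.eq_iff] at he
      rcases he with ⟨-, rfl⟩ | ⟨rfl, rfl⟩
      · exact ⟨h', P'', rfl⟩
      · exact ⟨h', P'', rfl⟩
    · exfalso
      have : a ∈ P''.support := P''.fst_mem_support_of_mem_edges he
      rw [Walk.support_cons, List.nodup_cons] at hnd
      exact hnd.1 this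

/-- Uniqueness version of `aux_ep`. -/
lemma aux_eu {a b q : V} (P : G.Walk a b) (hnd : P.support.Nodup)
    (he : s(a, q) ∈ P.edges) {c : V} {h : G.Adj a c} {P' : G.Walk c b}
    (hP : P = Walk.cons h P') : q = c := by
  subst hP
  rw [Walk.edges_cons, List.mem_cons] at he
  rcases he with he | he
  · rw [Sym2.eq_iff] at he
    rcases he with ⟨-, rfl⟩ | ⟨rfl, rfl⟩
    · rfl
    · exact absurd rfl h.ne
  · exfalso
    have : a ∈ P'.support := P'.fst_mem_support_of_mem_edges he
    rw [Walk.support_cons, List.nodup_cons] at hnd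
    exact hnd.1 this

/-- In a cycle, each support vertex has exactly two "edge-neighbours". -/
lemma aux_cycle_nbrs [DecidableEq V] {z w : V} (C : G.Walk z z) (hC : C.IsCycle)
    (hw : w ∈ C.support) :
    ∃ u v : V, u ≠ v ∧ s(w, u) ∈ C.edges ∧ s(w, v) ∈ C.edges ∧
      ∀ t, s(w, t) ∈ C.edges → t = u ∨ t = v := by
  have hC' : (C.rotate w hw).IsCycle := hC.rotate hw
  have hmem : ∀ e, e ∈ (C.rotate w hw).edges ↔ e ∈ C.edges := fun e =>
    (C.rotate_edges w hw).mem_iff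
  set C' : G.Walk w w := C.rotate w hw with hC'def
  clear_value C'
  suffices h : ∃ u v : V, u ≠ v ∧ s(w, u) ∈ C'.edges ∧ s(w, v) ∈ C'.edges ∧
      ∀ t, s(w, t) ∈ C'.edges → t = u ∨ t = v by
    obtain ⟨u, v, huv, h1, h2, h3⟩ := h
    exact ⟨u, v, huv, (hmem _).mp h1, (hmem _).mp h2,
      fun t ht => h3 t ((hmem _).mpr ht)⟩
  clear hC'def hmem hC hw
  obtain ⟨c, hwc, D, rfl⟩ := Walk.not_nil_iff.mp hC'.not_nil
  obtain ⟨hDpath, hne⟩ := (Walk.cons_isCycle_iff _ _).mp hC'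
  have hDnn : ¬ D.Nil := Walk.not_nil_of_ne hwc.ne'
  have hDrnn : ¬ D.reverse.Nil := by
    rwa [Walk.nil_iff_length_eq, Walk.length_reverse, ← Walk.nil_iff_length_eq]
  obtain ⟨v, hwv, T, hT⟩ := Walk.not_nil_iff.mp hDrnn
  have hvD : s(w, v) ∈ D.edges := by
    rw [← List.mem_reverse, ← Walk.edges_reverse, hT, Walk.edges_cons]
    exact List.mem_cons_self
  refine ⟨c, v, ?_, ?_, ?_, ?_⟩
  · rintro rfl; exact hne hvD
  · rw [Walk.edges_cons]; exact List.mem_cons_self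
  · rw [Walk.edges_cons]; exact List.mem_cons_of_mem _ hvD
  · intro t ht
    rw [Walk.edges_cons, List.mem_cons] at ht
    rcases ht with ht | ht
    · rw [Sym2.eq_iff] at ht
      rcases ht with ⟨-, rfl⟩ | ⟨rfl, rfl⟩
      · exact Or.inl rfl
      · exact absurd rfl hwc.ne
    · right
      exact aux_eu D.reverse (hDpath.reverse.support_nodup)
        (by rw [Walk.edges_reverse, List.mem_reverse]; exact ht) hT

/-- In a path, each interior vertex has exactly two "edge-neighbours". -/
lemma aux_path_nbrs [DecidableEq V] {a b w : V} (P : G.Walk a b) (hP : P.IsPath)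
    (hw : w ∈ P.support) (hwa : w ≠ a) (hwb : w ≠ b) :
    ∃ u v : V, u ≠ v ∧ s(w, u) ∈ P.edges ∧ s(w, v) ∈ P.edges ∧
      ∀ t, s(w, t) ∈ P.edges → t = u ∨ t = v := by
  have hspec := P.take_spec hw
  set P₁ := P.takeUntil w hw with hP₁
  set P₂ := P.dropUntil w hw with hP₂
  have hP₁p : P₁.IsPath := hP.takeUntil hw
  have hP₂p : P₂.IsPath := hP.dropUntil hw
  have hmem : ∀ e, e ∈ P.edges ↔ e ∈ P₁.edges ∨ e ∈ P₂.edges := by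
    intro e
    rw [← hspec, Walk.edges_append, List.mem_append]
  have hnd : P₁.edges.Disjoint P₂.edges := by
    have := hP.isTrail.edges_nodup
    rw [← hspec, Walk.edges_append] at this
    exact (List.nodup_append'.mp this).2.2
  have hP₁rnn : ¬ P₁.reverse.Nil :=
    Walk.not_nil_of_ne (fun h => hwa h)
  have hP₂nn : ¬ P₂.Nil := Walk.not_nil_of_ne hwb
  obtain ⟨u, hwu, T₁, hT₁⟩ := Walk.not_nil_iff.mp hP₁rnn
  obtain ⟨v, hwv, T₂, hT₂⟩ := Walk.not_nil_iff.mp hP₂nn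
  have huP₁ : s(w, u) ∈ P₁.edges := by
    rw [← List.mem_reverse, ← Walk.edges_reverse, hT₁, Walk.edges_cons]
    exact List.mem_cons_self
  have hvP₂ : s(w, v) ∈ P₂.edges := by
    rw [hT₂, Walk.edges_cons]; exact List.mem_cons_self
  refine ⟨u, v, ?_, (hmem _).mpr (Or.inl huP₁), (hmem _).mpr (Or.inr hvP₂), ?_⟩
  · rintro rfl
    exact hnd huP₁ hvP₂
  · intro t ht
    rcases (hmem _).mp ht with ht | ht
    · left
      exact aux_eu P₁.reverse hP₁p.reverse.support_nodup
        (by rw [Walk.edges_reverse, List.mem_reverse]; exact ht) hT₁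
    · right
      exact aux_eu P₂ hP₂p.support_nodup ht hT₂

/-- Propagation lemma: along a path `R` whose interior vertices `w` (lying on
`C`) have the property that the `C`-edges at `w` are exactly the `Qmem`-edges
at `w`, all edges of `R` (which are `Qmem`) are equivalent for membership
in `C.edges`. -/
lemma aux_chain {z : V} (C : G.Walk z z) (Qmem : Sym2 V → Prop) :
    ∀ {u y : V} (R : G.Walk u y), R.IsPath →
    (∀ w, w ∈ R.support → w ≠ u → w ≠ y → w ∈ C.support →
      ∀ t, (s(w, t) ∈ C.edges ↔ Qmem s(w, t))) →
    (∀ e ∈ R.edges, Qmem e) →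
    ∀ e₁ ∈ R.edges, ∀ e₂ ∈ R.edges, (e₁ ∈ C.edges ↔ e₂ ∈ C.edges) := by
  intro u y R
  induction R with
  | nil => intro _ _ _ e₁ he₁; simp at he₁
  | @cons u v y h R' ih =>
    intro hRp hiff hQ e₁ he₁ e₂ he₂
    have hR'p : R'.IsPath := hRp.of_cons
    have huR' : u ∉ R'.support := ((Walk.cons_isPath_iff _ _).mp hRp).2
    cases R' with
    | nil =>
      simp only [Walk.edges_cons, Walk.edges_nil, List.mem_cons,
        List.not_mem_nil, or_false] at he₁ he₂
      rw [he₁, he₂]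
    | @cons _ v₂ _ h₂ R'' =>
      -- v is an interior vertex of R
      have hvy : v ≠ y := by
        rintro rfl
        exact ((Walk.cons_isPath_iff _ _).mp hR'p).2 R''.end_mem_support
      have hvmem : v ∈ (Walk.cons h (Walk.cons h₂ R'')).support := by
        rw [Walk.support_cons]
        exact List.mem_cons_of_mem _ (Walk.start_mem_support _)
      have key : s(u, v) ∈ C.edges ↔ s(v, v₂) ∈ C.edges := by
        constructor
        · intro hin
          have hvC : v ∈ C.support := C.snd_mem_support_of_mem_edges hin
          refine (hiff v hvmem h.ne' hvy hvC v₂).mpr ?_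
          exact hQ _ (by simp [Walk.edges_cons])
        · intro hin
          have hvC : v ∈ C.support := C.fst_mem_support_of_mem_edges hin
          have := (hiff v hvmem h.ne' hvy hvC u).mpr
            (by rw [Sym2.eq_swap]; exact hQ _ (by simp [Walk.edges_cons]))
          rwa [Sym2.eq_swap] at this
      have hiff' : ∀ w, w ∈ (Walk.cons h₂ R'').support → w ≠ v → w ≠ y →
          w ∈ C.support → ∀ t, (s(w, t) ∈ C.edges ↔ Qmem s(w, t)) := by
        intro w hwmem hwv hwy hwC t
        refine hiff w ?_ ?_ hwy hwC t
        · rw [Walk.support_cons]; exact List.mem_cons_of_mem _ hwmem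
        · rintro rfl; exact huR' hwmem
      have hQ' : ∀ e ∈ (Walk.cons h₂ R'').edges, Qmem e := by
        intro e he
        exact hQ e (by rw [Walk.edges_cons]; exact List.mem_cons_of_mem _ he)
      have ihall := ih hR'p hiff' hQ'
      have pivot : s(v, v₂) ∈ (Walk.cons h₂ R'').edges := by
        simp [Walk.edges_cons]
      rw [Walk.edges_cons, List.mem_cons] at he₁ he₂
      have get : ∀ e, e = s(u, v) ∨ e ∈ (Walk.cons h₂ R'').edges →
          (e ∈ C.edges ↔ s(v, v₂) ∈ C.edges) := by
        rintro e (rfl | he)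
        · exact key
        · exact ihall e he _ pivot
      rw [get e₁ he₁, get e₂ he₂]

/-- Structure lemma: if a walk `D` from `u` to `x` inside the cycle `C` begins
at the start of a path `R` from `u` to `y` which it is forced to follow
(the only `C`-edges at interior vertices of `R` are the `R`-edges plus the
entering edge), then `D` is `R` followed by some walk from `y` to `x`. -/
lemma aux_pre {z x : V} (C : G.Walk z z) :
    ∀ {u y : V} (R : G.Walk u y) (D : G.Walk u x), R.IsPath →
    (∀ w ∈ R.support, w ≠ x) →
    (∀ e ∈ D.edges, e ∈ C.edges) →
    D.edges.Nodup →
    ∀ p : V, s(p, u) ∉ D.edges →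
    (∀ w ∈ R.support, w ≠ y → ∀ t, s(w, t) ∈ C.edges →
      s(w, t) ∈ R.edges ∨ (w = u ∧ t = p)) →
    ∃ W : G.Walk y x, D = R.append W := by
  intro u y R
  induction R with
  | nil =>
    intro D _ _ _ _ _ _ _
    exact ⟨D, by rw [Walk.nil_append]⟩
  | @cons u v y h R' ih =>
    intro D hRp hRx hDC hDnd p h3 h1
    have huR' : u ∉ R'.support := ((Walk.cons_isPath_iff _ _).mp hRp).2
    have hux : u ≠ x := hRx u (Walk.start_mem_support _)
    obtain ⟨d, hud, D₂, hD⟩ := Walk.not_nil_iff.mp (Walk.not_nil_of_ne (p := D) hux)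
    subst hD
    have hd1 : s(u, d) ∈ (Walk.cons hud D₂).edges := by simp [Walk.edges_cons]
    have hdC : s(u, d) ∈ C.edges := hDC _ hd1
    have huy : u ≠ y := by
      rintro rfl
      exact huR' R'.end_mem_support
    have hdv : d = v := by
      rcases h1 u (Walk.start_mem_support _) huy d hdC with hin | ⟨-, rfl⟩
      · rw [Walk.edges_cons, List.mem_cons] at hin
        rcases hin with hin | hin
        · rw [Sym2.eq_iff] at hin
          rcases hin with ⟨-, rfl⟩ | ⟨rfl, rfl⟩
          · rfl
          · exact absurd rfl h.ne
        · exact absurd (R'.fst_mem_support_of_mem_edges hin) huR'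
      · exact absurd (by rwa [Sym2.eq_swap] at hd1) h3
    subst hdv
    rw [Walk.edges_cons, List.nodup_cons] at hDnd
    obtain ⟨W, hW⟩ := ih D₂ hRp.of_cons
      (fun w hw => hRx w (by rw [Walk.support_cons]; exact List.mem_cons_of_mem _ hw))
      (fun e he => hDC e (by rw [Walk.edges_cons]; exact List.mem_cons_of_mem _ he))
      hDnd.2 u hDnd.1
      (by
        intro w hw hwy t htC
        have hwu : w ≠ u := fun hh => huR' (hh ▸ hw)
        rcases h1 w (by rw [Walk.support_cons]; exact List.mem_cons_of_mem _ hw)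
          hwy t htC with hin | ⟨rfl, -⟩
        · rw [Walk.edges_cons, List.mem_cons] at hin
          rcases hin with hin | hin
          · rw [Sym2.eq_iff] at hin
            rcases hin with ⟨rfl, rfl⟩ | ⟨rfl, rfl⟩
            · exact absurd rfl hwu
            · exact Or.inr ⟨rfl, rfl⟩
          · exact Or.inl hin
        · exact absurd rfl hwu)
    exact ⟨W, by rw [Walk.cons_append, hW]⟩

/-- From a cycle containing the edge `s(x, q)` we can produce a cycle based at
`x` starting with that edge, with the same edge membership and length. -/
lemma aux_reroot [DecidableEq V] {z x q : V} (C : G.Walk z z) (hC : C.IsCycle)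
    (hxq : G.Adj x q) (he : s(x, q) ∈ C.edges) :
    ∃ D : G.Walk q x, (Walk.cons hxq D).IsCycle ∧
      (∀ e, e ∈ (Walk.cons hxq D).edges ↔ e ∈ C.edges) ∧
      (Walk.cons hxq D).length = C.length := by
  have hxC : x ∈ C.support := C.fst_mem_support_of_mem_edges he
  have hC₂ : (C.rotate x hxC).IsCycle := hC.rotate hxC
  have hmem : ∀ e, e ∈ (C.rotate x hxC).edges ↔ e ∈ C.edges := fun e =>
    (C.rotate_edges x hxC).mem_iff
  have hlen : (C.rotate x hxC).length = C.length := by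
    rw [← Walk.length_edges, ← Walk.length_edges]
    exact ((C.rotate_edges x hxC).perm.length_eq)
  have he₂ : s(x, q) ∈ (C.rotate x hxC).edges := (hmem _).mpr he
  set C₂ : G.Walk x x := C.rotate x hxC with hC₂def
  clear_value C₂
  clear hC₂def he hC hxC
  obtain ⟨c, hxc, D, hD⟩ := Walk.not_nil_iff.mp hC₂.not_nil
  subst hD
  obtain ⟨hDpath, hnotin⟩ := (Walk.cons_isCycle_iff _ _).mp hC₂
  by_cases hcq : c = q
  · subst hcq
    exact ⟨D, hC₂, hmem, hlen⟩
  · -- the edge s(x,q) lies in D; reverse the cycle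
    have heD : s(x, q) ∈ D.edges := by
      rw [Walk.edges_cons, List.mem_cons] at he₂
      rcases he₂ with h' | h'
      · exfalso
        rw [Sym2.eq_iff] at h'
        rcases h' with ⟨-, h'⟩ | ⟨h', -⟩
        · exact hcq h'.symm
        · exact hxc.ne h'
      · exact h'
    have hDrp : D.reverse.IsPath := hDpath.reverse
    obtain ⟨hxq', P', hP'⟩ := aux_ep D.reverse hDrp.support_nodup
      (by rw [Walk.edges_reverse, List.mem_reverse]; exact heD)
    have hxP' : x ∉ P'.support := by
      have := hDrp.support_nodup
      rw [hP', Walk.support_cons, List.nodup_cons] at this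
      exact this.1
    have hP'p : P'.IsPath := by
      rw [hP'] at hDrp
      exact hDrp.of_cons
    have hD_mem : ∀ e, e ∈ D.edges ↔ e = s(x, q) ∨ e ∈ P'.edges := by
      intro e
      rw [← List.mem_reverse, ← Walk.edges_reverse, hP', Walk.edges_cons, List.mem_cons]
    have hsxq : s(x, q) ∉ P'.edges := by
      have := hDrp.isTrail.edges_nodup
      rw [hP', Walk.edges_cons, List.nodup_cons] at this
      exact this.1
    have hconc_path : (P'.concat hxc.symm).IsPath := by
      rw [← Walk.isPath_reverse_iff, Walk.reverse_concat, Walk.cons_isPath_iff]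
      refine ⟨hP'p.reverse, ?_⟩
      rw [Walk.support_reverse, List.mem_reverse]
      exact hxP'
    have hconc_edges : ∀ e, e ∈ (P'.concat hxc.symm).edges ↔
        e ∈ P'.edges ∨ e = s(c, x) := by
      intro e
      rw [Walk.edges_concat, List.concat_eq_append, List.mem_append]
      simp
    refine ⟨P'.concat hxc.symm, ?_, ?_, ?_⟩
    · rw [Walk.cons_isCycle_iff]
      refine ⟨hconc_path, ?_⟩
      rw [hconc_edges]
      rintro (h' | h')
      · exact hsxq h'
      · rw [Sym2.eq_iff] at h'
        rcases h' with ⟨h', -⟩ | ⟨-, h'⟩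
        · exact hxc.ne h'
        · exact hcq h'.symm
    · intro e
      rw [← hmem e, Walk.edges_cons, Walk.edges_cons, List.mem_cons, List.mem_cons,
        hconc_edges, hD_mem]
      constructor
      · rintro (rfl | h' | rfl)
        · exact Or.inr (Or.inl rfl)
        · exact Or.inr (Or.inr h')
        · exact Or.inl (Sym2.eq_swap)
      · rintro (rfl | rfl | h')
        · exact Or.inr (Or.inr Sym2.eq_swap)
        · exact Or.inl rfl
        · exact Or.inr (Or.inl h')
    · have hDlen : D.length = P'.length + 1 := by
        have := congrArg Walk.length hP'
        rw [Walk.length_cons, Walk.length_reverse] at this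
        exact this
      rw [← hlen, Walk.length_cons, Walk.length_cons, Walk.length_concat, hDlen]

end AuxLemmas

/-- let `G` be connected and `F` a frame of `G` maximizing
`ds(F)`. For every `F`-path `Q` with endvertices `x, y` there is an
`x`–`y`-path of length less than `ℓ` contained in `F`; moreover, if every
long cycle in `G` has length at least `2ℓ`, then this short `x`–`y`-path
in `F` is unique. -/
theorem frame_shadow_exists_unique {V : Type} [Fintype V] (G : SimpleGraph V)
    (ℓ : ℕ) (hℓ : 3 ≤ ℓ) (hG : G.Connected)
    (F : G.Subgraph) (hF : IsFrame ℓ F)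
    (hmax : ∀ F' : G.Subgraph, IsFrame ℓ F' → dsF F' ≤ dsF F) :
    ∀ {x y : V} (Q : G.Walk x y), x ≠ y → Q.IsPath →
      x ∈ F.verts → y ∈ F.verts →
      (∀ z ∈ Q.support, z ≠ x → z ≠ y → z ∉ F.verts) →
      (∀ e ∈ Q.edges, e ∉ F.edgeSet) →
      (∃ R : G.Walk x y, R.IsPath ∧ R.length < ℓ ∧
          ∀ e ∈ R.edges, e ∈ F.edgeSet) ∧
      ((∀ (z : V) (C : G.Walk z z), C.IsCycle → ℓ ≤ C.length → 2 * ℓ ≤ C.length) →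
        ∀ R₁ R₂ : G.Walk x y,
          R₁.IsPath → R₁.length < ℓ → (∀ e ∈ R₁.edges, e ∈ F.edgeSet) →
          R₂.IsPath → R₂.length < ℓ → (∀ e ∈ R₂.edges, e ∈ F.edgeSet) →
          R₁ = R₂) := by
  classical
  intro x y Q hxy hQp hxF hyF hQint hQF
  constructor
  · -- existence
    obtain ⟨q₁, hxq₁, R₀, hQeq⟩ := Walk.not_nil_iff.mp (Walk.not_nil_of_ne (p := Q) hxy)
    subst hQeq
    have he₁Q : s(x, q₁) ∈ (Walk.cons hxq₁ R₀).edges := by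
      rw [Walk.edges_cons]; exact List.mem_cons_self
    set F' : G.Subgraph := F ⊔ (Walk.cons hxq₁ R₀).toSubgraph with hF'
    have hmono : ∀ v, F.neighborSet v ⊆ F'.neighborSet v := by
      intro v t ht
      exact (Subgraph.sup_adj).mpr (Or.inl ht)
    have hQadj : ∀ {a b : V}, s(a, b) ∈ (Walk.cons hxq₁ R₀).edges → F'.Adj a b := by
      intro a b hab
      exact (Subgraph.sup_adj).mpr (Or.inr (Subgraph.mem_edgeSet.mp
        ((Walk.mem_edges_toSubgraph _).mpr hab)))
    -- minimum degree 2 in F'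
    have hdeg : ∀ v ∈ F'.verts, 2 ≤ (F'.neighborSet v).ncard := by
      have hbase : ∀ v ∈ F.verts, 2 ≤ (F'.neighborSet v).ncard := by
        intro v hv
        calc 2 ≤ (F.neighborSet v).ncard := hF.1 v hv
          _ ≤ (F'.neighborSet v).ncard := Set.ncard_le_ncard (hmono v) (Set.toFinite _)
      intro v hv
      rw [hF', Subgraph.verts_sup, Set.mem_union] at hv
      rcases hv with hv | hv
      · exact hbase v hv
      · rw [Walk.verts_toSubgraph, Set.mem_setOf_eq] at hv
        by_cases hvx : v = x
        · exact hbase v (hvx ▸ hxF)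
        by_cases hvy : v = y
        · exact hbase v (hvy ▸ hyF)
        obtain ⟨u, w, huw, h1, h2, -⟩ := aux_path_nbrs _ hQp hv hvx hvy
        have hsub : ({u, w} : Set V) ⊆ F'.neighborSet v := by
          rintro t (rfl | rfl)
          · exact hQadj h1
          · exact hQadj h2
        calc 2 = ({u, w} : Set V).ncard := (Set.ncard_pair huw).symm
          _ ≤ (F'.neighborSet v).ncard := Set.ncard_le_ncard hsub (Set.toFinite _)
    by_cases hfr : IsFrame ℓ F'
    · -- F' is a frame : contradiction with ds-maximality
      exfalso
      have hq₁ : q₁ ∉ F.neighborSet x := by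
        intro h'
        exact hQF _ he₁Q (Subgraph.mem_edgeSet.mpr h')
      have hmonoc : ∀ v, (F.neighborSet v).ncard ≤ (F'.neighborSet v).ncard :=
        fun v => Set.ncard_le_ncard (hmono v) (Set.toFinite _)
      have hx' : (F.neighborSet x).ncard + 1 ≤ (F'.neighborSet x).ncard := by
        rw [← Set.ncard_insert_of_notMem hq₁ (Set.toFinite _)]
        refine Set.ncard_le_ncard ?_ (Set.toFinite _)
        rintro t (rfl | ht)
        · exact hQadj he₁Q
        · exact hmono x ht
      have hx2 : 2 ≤ (F.neighborSet x).ncard := hF.1 x hxF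
      have hlt : dsF F < dsF F' := by
        unfold dsF
        have hSS' : Finset.univ.filter (fun v => 3 ≤ (F.neighborSet v).ncard) ⊆
            Finset.univ.filter (fun v => 3 ≤ (F'.neighborSet v).ncard) := by
          intro v hv
          simp only [Finset.mem_filter, Finset.mem_univ, true_and] at hv ⊢
          exact le_trans hv (hmonoc v)
        have hxS' : x ∈ Finset.univ.filter (fun v => 3 ≤ (F'.neighborSet v).ncard) := by
          simp only [Finset.mem_filter, Finset.mem_univ, true_and]
          omega
        by_cases hxS : x ∈ Finset.univ.filter (fun v => 3 ≤ (F.neighborSet v).ncard)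
        · calc ∑ v ∈ Finset.univ.filter (fun v => 3 ≤ (F.neighborSet v).ncard),
                (F.neighborSet v).ncard
              < ∑ v ∈ Finset.univ.filter (fun v => 3 ≤ (F.neighborSet v).ncard),
                (F'.neighborSet v).ncard :=
                Finset.sum_lt_sum (fun i _ => hmonoc i) ⟨x, hxS, by omega⟩
            _ ≤ ∑ v ∈ Finset.univ.filter (fun v => 3 ≤ (F'.neighborSet v).ncard),
                (F'.neighborSet v).ncard :=
                Finset.sum_le_sum_of_subset hSS'
        · calc ∑ v ∈ Finset.univ.filter (fun v => 3 ≤ (F.neighborSet v).ncard),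
                (F.neighborSet v).ncard
              ≤ ∑ v ∈ Finset.univ.filter (fun v => 3 ≤ (F.neighborSet v).ncard),
                (F'.neighborSet v).ncard := Finset.sum_le_sum (fun i _ => hmonoc i)
            _ < ∑ v ∈ Finset.univ.filter (fun v => 3 ≤ (F'.neighborSet v).ncard),
                (F'.neighborSet v).ncard :=
                Finset.sum_lt_sum_of_subset hSS' hxS' hxS (by omega)
                  (fun j _ _ => Nat.zero_le _)
      exact absurd (hmax F' hfr) (Nat.not_le.mpr hlt)
    · -- F' is not a frame, so it has a short cycle
      have hcyc : ¬ (∀ (z : V) (C : G.Walk z z), C.IsCycle →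
          (∀ e ∈ C.edges, e ∈ F'.edgeSet) → ℓ ≤ C.length) := by
        intro h'
        exact hfr ⟨hdeg, h'⟩
      push_neg at hcyc
      obtain ⟨z, C, hC, hCF', hClen⟩ := hcyc
      have hCsplit : ∀ e ∈ C.edges, e ∈ F.edgeSet ∨ e ∈ (Walk.cons hxq₁ R₀).edges := by
        intro e he
        have := hCF' e he
        rw [hF', Subgraph.edgeSet_sup, Set.mem_union] at this
        rcases this with h' | h'
        · exact Or.inl h'
        · exact Or.inr ((Walk.mem_edges_toSubgraph _).mp h')
      have hCQ : ∃ e ∈ C.edges, e ∈ (Walk.cons hxq₁ R₀).edges := by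
        by_contra h'
        push_neg at h'
        refine absurd (hF.2 z C hC ?_) (Nat.not_le.mpr hClen)
        intro e he
        rcases hCsplit e he with h'' | h''
        · exact h''
        · exact absurd h'' (h' e he)
      -- the key local fact at interior vertices of Q
      have hF1 : ∀ w, w ∈ (Walk.cons hxq₁ R₀).support → w ≠ x → w ≠ y →
          w ∈ C.support → ∀ t,
          (s(w, t) ∈ C.edges ↔ s(w, t) ∈ (Walk.cons hxq₁ R₀).edges) := by
        intro w hw hwx hwy hwC t
        have hwF : w ∉ F.verts := hQint w hw hwx hwy
        have dirC : ∀ t', s(w, t') ∈ C.edges → s(w, t') ∈ (Walk.cons hxq₁ R₀).edges := by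
          intro t' ht'
          rcases hCsplit _ ht' with h' | h'
          · exact absurd (Subgraph.mem_edgeSet.mp h').fst_mem hwF
          · exact h'
        refine ⟨dirC t, fun ht => ?_⟩
        obtain ⟨u₀, v₀, h00, h01, h02, h03⟩ := aux_path_nbrs _ hQp hw hwx hwy
        obtain ⟨u₁, v₁, h10, h11, h12, h13⟩ := aux_cycle_nbrs C hC hwC
        have hu₁ := h03 _ (dirC _ h11)
        have hv₁ := h03 _ (dirC _ h12)
        have both : s(w, u₀) ∈ C.edges ∧ s(w, v₀) ∈ C.edges := by
          rcases hu₁ with h' | h'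
          · rcases hv₁ with h'' | h''
            · exact absurd (h'.trans h''.symm) h10
            · exact ⟨h' ▸ h11, h'' ▸ h12⟩
          · rcases hv₁ with h'' | h''
            · exact ⟨h'' ▸ h12, h' ▸ h11⟩
            · exact absurd (h'.trans h''.symm) h10
        rcases h03 t ht with rfl | rfl
        · exact both.1
        · exact both.2
      -- all edges of Q lie on C
      have hall : ∀ e ∈ (Walk.cons hxq₁ R₀).edges, e ∈ C.edges := by
        obtain ⟨e₀, he₀C, he₀Q⟩ := hCQ
        intro e he
        exact (aux_chain C (· ∈ (Walk.cons hxq₁ R₀).edges) _ hQp hF1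
          (fun e' he' => he') e he e₀ he₀Q).mpr he₀C
      have he₁C : s(x, q₁) ∈ C.edges := hall _ he₁Q
      obtain ⟨D, hDcyc, hDmem, hDlen⟩ := aux_reroot C hC hxq₁ he₁C
      have hDnodup : (Walk.cons hxq₁ D).edges.Nodup := hDcyc.isCircuit.isTrail.edges_nodup
      rw [Walk.edges_cons, List.nodup_cons] at hDnodup
      have hR₀p : R₀.IsPath := hQp.of_cons
      have hxR₀ : x ∉ R₀.support := ((Walk.cons_isPath_iff _ _).mp hQp).2
      obtain ⟨W, hW⟩ := aux_pre C R₀ D hR₀p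
        (fun w hw => fun h' => hxR₀ (h' ▸ hw))
        (fun e he => (hDmem e).mp (by rw [Walk.edges_cons]; exact List.mem_cons_of_mem _ he))
        hDnodup.2 x hDnodup.1
        (by
          intro w hw hwy t htC
          have hwx : w ≠ x := fun h' => hxR₀ (h' ▸ hw)
          have hwQ : w ∈ (Walk.cons hxq₁ R₀).support := by
            rw [Walk.support_cons]; exact List.mem_cons_of_mem _ hw
          have hwC : w ∈ C.support := C.fst_mem_support_of_mem_edges htC
          have := (hF1 w hwQ hwx hwy hwC t).mp htC
          rw [Walk.edges_cons, List.mem_cons] at this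
          rcases this with h' | h'
          · rw [Sym2.eq_iff] at h'
            rcases h' with ⟨h', -⟩ | ⟨h', h''⟩
            · exact absurd h' hwx
            · exact Or.inr ⟨h', h''⟩
          · exact Or.inl h')
      -- D = R₀.append W ; the walk W lies in F
      have hDedges : D.edges = R₀.edges ++ W.edges := by
        rw [hW, Walk.edges_append]
      have hWF : ∀ e ∈ W.edges, e ∈ F.edgeSet := by
        intro e he
        have heD : e ∈ D.edges := by rw [hDedges]; exact List.mem_append_right _ he
        have heC : e ∈ C.edges := (hDmem e).mp
          (by rw [Walk.edges_cons]; exact List.mem_cons_of_mem _ heD)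
        rcases hCsplit e heC with h' | h'
        · exact h'
        · exfalso
          rw [Walk.edges_cons, List.mem_cons] at h'
          rcases h' with rfl | h'
          · exact hDnodup.1 heD
          · have hDnd := hDnodup.2
            rw [hDedges, List.nodup_append'] at hDnd
            exact hDnd.2.2 h' he
      have hWlen : W.length < ℓ := by
        have h1 : (Walk.cons hxq₁ D).length = C.length := hDlen
        have h2 : D.length = R₀.length + W.length := by
          rw [hW, Walk.length_append]
        rw [Walk.length_cons] at h1
        omega
      refine ⟨W.reverse.bypass, Walk.bypass_isPath _, ?_, ?_⟩
      · calc W.reverse.bypass.length ≤ W.reverse.length := Walk.length_bypass_le _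
          _ = W.length := Walk.length_reverse _
          _ < ℓ := hWlen
      · intro e he
        have := Walk.edges_bypass_subset _ he
        rw [Walk.edges_reverse, List.mem_reverse] at this
        exact hWF e this
  · -- uniqueness
    intro h2ℓ R₁ R₂ h1p h1len h1F h2p h2len h2F
    by_contra hne
    set S : Set (Sym2 V) := {e | e ∈ R₁.edges ∨ e ∈ R₂.edges} with hS
    set H := SimpleGraph.fromEdgeSet S with hH
    have hHG : H ≤ G := by
      intro a b hab
      rw [hH, fromEdgeSet_adj] at hab
      rcases hab.1 with h' | h'
      · exact Walk.adj_of_mem_edges _ h'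
      · exact Walk.adj_of_mem_edges _ h'
    have hedge : ∀ (R : G.Walk x y), (∀ e ∈ R.edges, e ∈ S) →
        ∀ e ∈ R.edges, e ∈ H.edgeSet := by
      intro R hR e he
      rw [hH, edgeSet_fromEdgeSet]
      exact ⟨hR e he, G.not_isDiag_of_mem_edgeSet (R.edges_subset_edgeSet he)⟩
    have h₁ : ∀ e ∈ R₁.edges, e ∈ H.edgeSet :=
      hedge R₁ (fun e he => Or.inl he)
    have h₂ : ∀ e ∈ R₂.edges, e ∈ H.edgeSet :=
      hedge R₂ (fun e he => Or.inr he)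
    have hnacyclic : ¬ H.IsAcyclic := by
      intro hac
      have hpeq := hac.path_unique ⟨R₁.transfer H h₁, h1p.transfer h₁⟩
        ⟨R₂.transfer H h₂, h2p.transfer h₂⟩
      have hval : R₁.transfer H h₁ = R₂.transfer H h₂ := congrArg Subtype.val hpeq
      apply hne
      have back : ∀ (R : G.Walk x y) (hR : ∀ e ∈ R.edges, e ∈ H.edgeSet),
          (R.transfer H hR).transfer G
            (fun e he => (R.transfer H hR).edges_subset_edgeSet he |> edgeSet_mono hHG) = R := by
        intro R hR
        rw [Walk.transfer_transfer]
        exact Walk.transfer_self R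
      calc R₁ = (R₁.transfer H h₁).transfer G _ := (back R₁ h₁).symm
        _ = (R₂.transfer H h₂).transfer G _ := by
              congr 1
        _ = R₂ := back R₂ h₂
    rw [IsAcyclic] at hnacyclic
    push_neg at hnacyclic
    obtain ⟨a, c, hc⟩ := hnacyclic
    set Cg : G.Walk a a := c.mapLe hHG with hCg
    have hCgcyc : Cg.IsCycle := hc.mapLe hHG
    have hCgedges : ∀ e, e ∈ Cg.edges ↔ e ∈ c.edges := by
      intro e
      rw [hCg, Walk.mapLe, Walk.edges_map]
      simp [Sym2.map_id']
    have hCS : ∀ e ∈ c.edges, e ∈ S := by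
      intro e he
      have := c.edges_subset_edgeSet he
      rw [hH, edgeSet_fromEdgeSet] at this
      exact this.1
    have hCgF : ∀ e ∈ Cg.edges, e ∈ F.edgeSet := by
      intro e he
      rcases hCS e ((hCgedges e).mp he) with h' | h'
      · exact h1F e h'
      · exact h2F e h'
    have hCglen : Cg.length = c.length := by
      rw [hCg, Walk.mapLe, Walk.length_map]
    have hlb : ℓ ≤ Cg.length := hF.2 a Cg hCgcyc hCgF
    have hlb2 : 2 * ℓ ≤ Cg.length := h2ℓ a Cg hCgcyc hlb
    have hub : Cg.length < 2 * ℓ := by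
      have hnodup : c.edges.Nodup := hc.isTrail.edges_nodup
      have hlen_eq : c.edges.length = c.edges.toFinset.card :=
        (List.toFinset_card_of_nodup hnodup).symm
      have hsub : c.edges.toFinset ⊆ R₁.edges.toFinset ∪ R₂.edges.toFinset := by
        intro e he
        rw [List.mem_toFinset] at he
        rcases hCS e he with h' | h'
        · exact Finset.mem_union_left _ (List.mem_toFinset.mpr h')
        · exact Finset.mem_union_right _ (List.mem_toFinset.mpr h')
      have : c.edges.length ≤ R₁.edges.length + R₂.edges.length := by
        calc c.edges.length = c.edges.toFinset.card := hlen_eq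
          _ ≤ (R₁.edges.toFinset ∪ R₂.edges.toFinset).card := Finset.card_le_card hsub
          _ ≤ R₁.edges.toFinset.card + R₂.edges.toFinset.card := Finset.card_union_le _ _
          _ ≤ R₁.edges.length + R₂.edges.length :=
              Nat.add_le_add (List.toFinset_card_le _) (List.toFinset_card_le _)
      rw [hCglen, ← Walk.length_edges]
      calc c.edges.length ≤ R₁.edges.length + R₂.edges.length := this
        _ = R₁.length + R₂.length := by rw [Walk.length_edges, Walk.length_edges]
        _ < ℓ + ℓ := Nat.add_lt_add h1len h2len
        _ = 2 * ℓ := (Nat.two_mul ℓ).symm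
    omega
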